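/- Let U = {U_i}_{i∈I} be a cover of a finite poset X by lower sets, and let (J, C) be an element of the completion poset Ĥ(U) (so C is a connected component of W_J ≠ ∅). Then for every subset J' ⊆ J there exists a unique connected component C' of W_{J'} with C ⊆ C'. Consequently, the map J' ↦ (J', C') is an order isomorphism from the poset of subsets of J onto the lower set { (J',C') ∈ Ĥ(U) : (J',C') ≤ (J,C) } of Ĥ(U). -/

import Mathlib

/-- The comparability relation inside a subset `U` of a poset. -/
def posetCompRel {X : Type*} [PartialOrder X] (U : Set X) (a b : X) : Prop :=
  a ∈ U ∧ b ∈ U ∧ (a ≤ b ∨ b ≤ a)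

/-- `C` is a connected component of `U` (w.r.t. the equivalence relation generated by
comparability inside `U`). -/
def IsComponent {X : Type*} [PartialOrder X] (U C : Set X) : Prop :=
  ∃ u ∈ U, C = {z | z ∈ U ∧ Relation.EqvGen (posetCompRel U) u z}

/-- A pair `(J, C)` is a valid element of the completion poset `Ĥ(U)` if
`W_J = ⋂_{i ∈ J} U_i` is nonempty and `C` is a connected component of `W_J`. -/
def ValidPair {X I : Type*} [PartialOrder X] (Uc : I → Set X)
    (p : Set I × Set X) : Prop :=
  (⋂ i ∈ p.1, Uc i).Nonempty ∧ IsComponent (⋂ i ∈ p.1, Uc i) p.2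

/-- The order of the completion poset: `(J, C) ≤ (J', C')` iff `J ⊆ J'` and `C' ⊆ C`. -/
def cylLeP {X I : Type*} (p q : Set I × Set X) : Prop :=
  p.1 ⊆ q.1 ∧ q.2 ⊆ p.2

lemma posetCompRel_mono {X : Type*} [PartialOrder X] {U V : Set X} (h : U ⊆ V) :
    ∀ a b, posetCompRel U a b → posetCompRel V a b :=
  fun _ _ ⟨ha, hb, hc⟩ => ⟨h ha, h hb, hc⟩

/-- A component of a smaller set meeting a component of a larger set is contained in it. -/
lemma comp_subset {X : Type*} [PartialOrder X] {U V C D : Set X} (hUV : U ⊆ V)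
    (hC : IsComponent U C) (hD : IsComponent V D) (h : (C ∩ D).Nonempty) : C ⊆ D := by
  obtain ⟨u, hu, rfl⟩ := hC
  obtain ⟨v, hv, rfl⟩ := hD
  obtain ⟨w, ⟨hwU, hw1⟩, ⟨hwV, hw2⟩⟩ := h
  rintro z ⟨hzU, hz⟩
  refine ⟨hUV hzU, ?_⟩
  have h1 : Relation.EqvGen (posetCompRel V) w z :=
    Relation.EqvGen.mono (posetCompRel_mono hUV) _ _
      (Relation.EqvGen.trans _ _ _ (Relation.EqvGen.symm _ _ hw1) hz)
  exact Relation.EqvGen.trans _ _ _ hw2 h1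

theorem stmt15 {X I : Type*} [PartialOrder X] [Fintype X] (Uc : I → Set X)
    (hl : ∀ i, IsLowerSet (Uc i)) (hcov : ∀ x : X, ∃ i, x ∈ Uc i)
    (J : Set I) (C : Set X)
    (hne : (⋂ i ∈ J, Uc i).Nonempty) (hC : IsComponent (⋂ i ∈ J, Uc i) C) :
    (∀ J' : Set I, J' ⊆ J →
      ∃! C' : Set X, IsComponent (⋂ i ∈ J', Uc i) C' ∧ C ⊆ C') ∧
    (∀ g : Set I → Set X,
      (∀ J' : Set I, J' ⊆ J → IsComponent (⋂ i ∈ J', Uc i) (g J') ∧ C ⊆ g J') →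
      (∀ J₁ : Set I, J₁ ⊆ J → ∀ J₂ : Set I, J₂ ⊆ J →
        (J₁ ⊆ J₂ ↔ cylLeP (X := X) (J₁, g J₁) (J₂, g J₂))) ∧
      (∀ (J' : Set I) (C' : Set X), ValidPair Uc (J', C') →
        cylLeP (X := X) (J', C') (J, C) → C' = g J')) := by
  have hW : ∀ {J₁ J₂ : Set I}, J₁ ⊆ J₂ → (⋂ i ∈ J₂, Uc i) ⊆ (⋂ i ∈ J₁, Uc i) := by
    intro J₁ J₂ h x hx
    simp only [Set.mem_iInter] at hx ⊢
    exact fun i hi => hx i (h hi)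
  obtain ⟨u, hu, hCdef⟩ := hC
  have hCu : u ∈ C := by rw [hCdef]; exact ⟨hu, Relation.EqvGen.refl u⟩
  have hCcomp : IsComponent (⋂ i ∈ J, Uc i) C := ⟨u, hu, hCdef⟩
  -- uniqueness of a component of W_{J'} containing C
  have uniq : ∀ (J' : Set I), ∀ C₁ C₂ : Set X,
      (IsComponent (⋂ i ∈ J', Uc i) C₁ ∧ C ⊆ C₁) →
      (IsComponent (⋂ i ∈ J', Uc i) C₂ ∧ C ⊆ C₂) → C₁ = C₂ := by
    intro J' C₁ C₂ ⟨h1, h1C⟩ ⟨h2, h2C⟩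
    have hmeet : (C₁ ∩ C₂).Nonempty := ⟨u, h1C hCu, h2C hCu⟩
    exact Set.Subset.antisymm
      (comp_subset (subset_refl _) h1 h2 hmeet)
      (comp_subset (subset_refl _) h2 h1 ⟨u, h2C hCu, h1C hCu⟩)
  have exist : ∀ J' : Set I, J' ⊆ J →
      ∃ C', IsComponent (⋂ i ∈ J', Uc i) C' ∧ C ⊆ C' := by
    intro J' hJ'
    refine ⟨_, ⟨u, hW hJ' hu, rfl⟩, ?_⟩
    intro z hz
    rw [hCdef] at hz
    exact ⟨hW hJ' hz.1, Relation.EqvGen.mono (posetCompRel_mono (hW hJ')) _ _ hz.2⟩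
  constructor
  · intro J' hJ'
    obtain ⟨C', hC'⟩ := exist J' hJ'
    exact ⟨C', hC', fun D hD => uniq J' D C' hD hC'⟩
  · intro g hg
    constructor
    · intro J₁ hJ₁ J₂ hJ₂
      constructor
      · intro h12
        refine ⟨h12, ?_⟩
        exact comp_subset (hW h12) (hg J₂ hJ₂).1 (hg J₁ hJ₁).1
          ⟨u, (hg J₂ hJ₂).2 hCu, (hg J₁ hJ₁).2 hCu⟩
      · exact fun h => h.1
    · intro J' C' hv hle
      have hJ' : J' ⊆ J := hle.1
      have hCC' : C ⊆ C' := hle.2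
      exact uniq J' C' (g J') ⟨hv.2, hCC'⟩ (hg J' hJ')
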